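/- Let $\pi \in \Pi(r)_{m|n}$ and $\mu \in \Lambda(m|n,r)$. If the set $\mathbf{T}^{su}(\pi,\mu)$ of semistandard $\pi$-supertableaux of content $\mu$ is nonempty, then $\tilde\pi \unrhd \mu$ in the dominance order, i.e. $\tilde\pi_1 + \cdots + \tilde\pi_s \ge \mu_1 + \cdots + \mu_s$ for all $1 \le s \le m+n$. -/

import Mathlib

open Finset

/-- The cells of the Young diagram of `π` (a partition of `r`), as a finite set of
pairs `(row, column)` (`0`-based). -/
def cells (r : ℕ) (pi : ℕ → ℕ) : Finset (ℕ × ℕ) :=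
  (Finset.range r ×ˢ Finset.range r).filter (fun p => p.2 < pi p.1)

/-- `T` is a semistandard `π`-supertableau of content `μ` (entries `0`-based, so the
"even" entries are those `< m` and the "odd" ones those in `[m, m+n)`):
entries lie in `[0, m+n)`; each value `k` occurs `μ k` times; rows and columns weakly
increase; even entries strictly increase down columns; odd entries strictly increase
along rows. -/
def IsSSSupertableau (m n r : ℕ) (pi : ℕ → ℕ) (T : ℕ × ℕ → ℕ) (mu : ℕ → ℕ) : Prop :=
  (∀ p ∈ cells r pi, T p < m + n) ∧
  (∀ k : ℕ, ((cells r pi).filter (fun p => T p = k)).card = mu k) ∧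
  (∀ i j : ℕ, j + 1 < pi i →
    T (i, j) ≤ T (i, j + 1) ∧ (m ≤ T (i, j) → T (i, j) < T (i, j + 1))) ∧
  (∀ i j : ℕ, j < pi (i + 1) →
    T (i, j) ≤ T (i + 1, j) ∧ (T (i, j) < m → T (i, j) < T (i + 1, j)))

/-- The composition `π̃ = (π_1,…,π_m ∣ (π_{m+1},…,π_{m+n})^t)` attached to
`π ∈ Π(r)_{m|n}` (`0`-based index `k`). -/
def tildePi (m r : ℕ) (pi : ℕ → ℕ) (k : ℕ) : ℕ :=
  if k < m then pi k
  else ((Finset.range r).filter (fun i => m ≤ i ∧ k - m < pi i)).card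

lemma aux_min (t p : ℕ) : ∑ j ∈ Finset.range t, (if j < p then (1:ℕ) else 0) = min t p := by
  induction t with
  | zero => simp
  | succ t ih => rw [Finset.sum_range_succ, ih]; split <;> omega

/-- if there exists a semistandard `π`-supertableau of content `μ`,
then `π̃` dominates `μ`: all partial sums satisfy `π̃_1+⋯+π̃_s ≥ μ_1+⋯+μ_s`. -/
theorem supertableau_dominance (m n r : ℕ) (pi : ℕ → ℕ)
    (hanti : Antitone pi) (hsum : ∑ i ∈ Finset.range r, pi i = r)
    (hvanish : ∀ i, r ≤ i → pi i = 0) (hmn : pi m ≤ n)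
    (mu : ℕ → ℕ) (hmu : ∑ k ∈ Finset.range (m + n), mu k = r)
    (T : ℕ × ℕ → ℕ) (hT : IsSSSupertableau m n r pi T mu) :
    ∀ s : ℕ, s ≤ m + n →
      ∑ k ∈ Finset.range s, mu k ≤ ∑ k ∈ Finset.range s, tildePi m r pi k := by
  obtain ⟨hlt, hcount, hrow, hcol⟩ := hT
  have lemA : ∀ i j, j < pi i → T (i, j) < m → i ≤ T (i, j) := by
    intro i
    induction i with
    | zero => intro j _ _; exact Nat.zero_le _
    | succ i ih =>
      intro j hj hTm
      have hj' : j < pi i := lt_of_lt_of_le hj (hanti (Nat.le_succ i))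
      have hc := hcol i j hj
      have h1 : T (i, j) < m := lt_of_le_of_lt hc.1 hTm
      have h2 := ih j hj' h1
      have h3 := hc.2 h1
      omega
  have lemB : ∀ i, m ≤ i → ∀ j, j < pi i → m + j ≤ T (i, j) := by
    intro i hi j
    induction j with
    | zero =>
      intro hj
      by_contra h
      have := lemA i 0 hj (by omega)
      omega
    | succ j ih =>
      intro hj
      have h1 := ih (by omega)
      have h2 := (hrow i j hj).2 (by omega)
      omega
  have cellmem : ∀ p : ℕ × ℕ, p ∈ cells r pi ↔ p.1 < r ∧ p.2 < r ∧ p.2 < pi p.1 := by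
    intro p; simp [cells, and_assoc]
  intro s hs
  have hC : ∑ k ∈ Finset.range s, mu k = ((cells r pi).filter (fun p => T p < s)).card := by
    rw [Finset.card_eq_sum_card_fiberwise (f := T) (t := Finset.range s)
      (fun p hp => Finset.mem_range.2 (Finset.mem_filter.1 hp).2)]
    apply Finset.sum_congr rfl
    intro k hk
    rw [← hcount k]
    congr 1
    rw [Finset.filter_filter]
    apply Finset.filter_congr
    intro p _
    simp only [Finset.mem_range] at hk
    constructor
    · intro h; omega
    · intro h; omega
  by_cases hsm : s ≤ m
  · rw [hC]
    calc ((cells r pi).filter (fun p => T p < s)).card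
        ≤ ((Finset.range s).biUnion (fun i => {i} ×ˢ Finset.range (pi i))).card := by
          apply Finset.card_le_card
          intro p hp
          obtain ⟨i, j⟩ := p
          rw [Finset.mem_filter, cellmem] at hp
          obtain ⟨⟨h1, h2, h3⟩, h4⟩ := hp
          have := lemA i j h3 (by omega)
          simp only [Finset.mem_biUnion, Finset.mem_range, Finset.mem_product,
            Finset.mem_singleton]
          exact ⟨i, by omega, rfl, h3⟩
      _ ≤ ∑ i ∈ Finset.range s, ({i} ×ˢ Finset.range (pi i)).card := Finset.card_biUnion_le
      _ = ∑ i ∈ Finset.range s, pi i := by simp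
      _ = ∑ k ∈ Finset.range s, tildePi m r pi k := by
          apply Finset.sum_congr rfl
          intro k hk
          simp only [Finset.mem_range] at hk
          simp [tildePi, show k < m by omega]
  · push_neg at hsm
    set t := s - m with ht
    have hst : s = m + t := by omega
    rw [hC]
    calc ((cells r pi).filter (fun p => T p < s)).card
        ≤ ((Finset.range r).biUnion
            (fun i => {i} ×ˢ Finset.range (if i < m then pi i else min (pi i) t))).card := by
          apply Finset.card_le_card
          intro p hp
          obtain ⟨i, j⟩ := p
          rw [Finset.mem_filter, cellmem] at hp
          obtain ⟨⟨h1, h2, h3⟩, h4⟩ := hp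
          dsimp only at h1 h2 h3 h4
          simp only [Finset.mem_biUnion, Finset.mem_range, Finset.mem_product,
            Finset.mem_singleton]
          refine ⟨i, h1, rfl, ?_⟩
          by_cases him : i < m
          · simpa [him] using h3
          · have := lemB i (by omega) j h3
            rw [if_neg him]
            omega
      _ ≤ ∑ i ∈ Finset.range r, ({i} ×ˢ Finset.range (if i < m then pi i else min (pi i) t)).card :=
          Finset.card_biUnion_le
      _ = ∑ i ∈ Finset.range r, (if i < m then pi i else min (pi i) t) := by simp
      _ = (∑ i ∈ Finset.range r, (if i < m then pi i else 0))
            + ∑ i ∈ Finset.range r, (if i < m then 0 else min (pi i) t) := by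
          rw [← Finset.sum_add_distrib]
          apply Finset.sum_congr rfl
          intro i _
          split <;> simp
      _ ≤ ∑ k ∈ Finset.range s, tildePi m r pi k := by
          rw [hst, Finset.sum_range_add]
          apply Nat.add_le_add
          · have hmt : ∑ k ∈ Finset.range m, tildePi m r pi k
                = ∑ k ∈ Finset.range m, pi k := by
              apply Finset.sum_congr rfl
              intro k hk
              simp [tildePi, Finset.mem_range.1 hk]
            rw [hmt, ← Finset.sum_filter]
            apply Finset.sum_le_sum_of_subset
            intro i hi
            simp only [Finset.mem_filter, Finset.mem_range] at hi ⊢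
            exact hi.2
          · -- ∑ i<r, ite(i<m) 0 (min π_i t) ≤ ∑ j<t, tildePi (m+j)
            have hmain : ∑ j ∈ Finset.range t, tildePi m r pi (m + j)
                = ∑ i ∈ Finset.range r, (if i < m then 0 else min (pi i) t) := by
              have h1 : ∀ j, tildePi m r pi (m + j)
                  = ∑ i ∈ Finset.range r, (if m ≤ i ∧ j < pi i then (1:ℕ) else 0) := by
                intro j
                simp only [tildePi, Nat.add_sub_cancel_left,
                  show ¬ (m + j < m) by omega, if_false]
                rw [Finset.card_filter]
              simp only [h1]
              rw [Finset.sum_comm]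
              apply Finset.sum_congr rfl
              intro i _
              by_cases him : i < m
              · simp [him, show ¬ m ≤ i by omega]
              · simp only [if_neg him, show m ≤ i by omega, true_and]
                rw [aux_min]
                omega
            rw [hmain]
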